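/- For i = 1,2, let Si be a finite symmetric generating set of a group Gi, let φ1 and φ2 each be graph isomorphisms from Cay(G1;S1) to Cay(G2;S2) with φ1(e) = e and φ2(e) = e, let gi ∈ Gi, let Si* = { ρ(gi) : ρ ∈ Aut(Cay(Gi;Si)), ρ(e) = e } be the orbit of gi under the stabilizer of the identity in Aut(Cay(Gi;Si)), and let Gi* = ⟨Si*⟩. If φ1(g1) = g2, then φ2 maps G1* bijectively onto G2*, and its restriction is a graph isomorphism from Cay(G1*; S1* ∪ (S1*)⁻¹) to Cay(G2*; S2* ∪ (S2*)⁻¹). -/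

import Mathlib

/-- The Cayley graph of a group `G` with respect to a symmetric set `S`
not containing the identity: `g` is adjacent to `h` iff `g⁻¹ * h ∈ S`. -/
def cayleyGraph {G : Type*} [Group G] (S : Set G)
    (hsymm : ∀ s ∈ S, s⁻¹ ∈ S) (hid : (1 : G) ∉ S) : SimpleGraph G where
  Adj g h := g⁻¹ * h ∈ S
  symm := by
    constructor
    intro g h hgh
    have h2 := hsymm _ hgh
    simpa [mul_inv_rev] using h2
  loopless := by
    constructor
    intro g hg
    simp only [inv_mul_cancel] at hg
    exact hid hg

/-- Left translation as an automorphism of a Cayley graph. -/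
def cayleyLeftMul {G : Type*} [Group G] (S : Set G)
    (hsymm : ∀ s ∈ S, s⁻¹ ∈ S) (hid : (1 : G) ∉ S) (a : G) :
    cayleyGraph S hsymm hid ≃g cayleyGraph S hsymm hid where
  toEquiv := Equiv.mulLeft a
  map_rel_iff' := by
    intro g h
    simp [cayleyGraph, mul_assoc, mul_inv_rev]

@[simp] lemma cayleyLeftMul_apply {G : Type*} [Group G] (S : Set G)
    (hsymm : ∀ s ∈ S, s⁻¹ ∈ S) (hid : (1 : G) ∉ S) (a g : G) :
    cayleyLeftMul S hsymm hid a g = a * g := rfl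

/-- **Lemma 2.3.** Let `Sᵢ* = {ρ(gᵢ) : ρ ∈ Aut_e(Cay(Gᵢ;Sᵢ))}` and
`Gᵢ* = ⟨Sᵢ*⟩`.  If `φ₁, φ₂` are isomorphisms `Cay(G₁;S₁) → Cay(G₂;S₂)` fixing
the identity and `φ₁(g₁) = g₂`, then `φ₂` restricts to an isomorphism from
`Cay(G₁*; S₁* ∪ (S₁*)⁻¹)` to `Cay(G₂*; S₂* ∪ (S₂*)⁻¹)`: it maps `G₁*`
bijectively onto `G₂*` and preserves adjacency. -/
theorem restriction_is_iso_on_orbit_subgroups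
    {G1 G2 : Type*} [Group G1] [Group G2]
    (S1 : Set G1) (S2 : Set G2)
    (hfin1 : S1.Finite) (hfin2 : S2.Finite)
    (hsymm1 : ∀ s ∈ S1, s⁻¹ ∈ S1) (hsymm2 : ∀ s ∈ S2, s⁻¹ ∈ S2)
    (hid1 : (1 : G1) ∉ S1) (hid2 : (1 : G2) ∉ S2)
    (hgen1 : Subgroup.closure S1 = ⊤) (hgen2 : Subgroup.closure S2 = ⊤)
    (φ1 φ2 : cayleyGraph S1 hsymm1 hid1 ≃g cayleyGraph S2 hsymm2 hid2)
    (hφ1e : φ1 1 = 1) (hφ2e : φ2 1 = 1)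
    (g1 : G1) (g2 : G2)
    (S1star : Set G1)
    (hS1star : S1star = {x : G1 |
      ∃ ρ : cayleyGraph S1 hsymm1 hid1 ≃g cayleyGraph S1 hsymm1 hid1,
        ρ 1 = 1 ∧ ρ g1 = x})
    (S2star : Set G2)
    (hS2star : S2star = {x : G2 |
      ∃ ρ : cayleyGraph S2 hsymm2 hid2 ≃g cayleyGraph S2 hsymm2 hid2,
        ρ 1 = 1 ∧ ρ g2 = x})
    (hg : φ1 g1 = g2) :
    Set.BijOn φ2 (Subgroup.closure S1star : Set G1)
      (Subgroup.closure S2star : Set G2) ∧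
    ∀ x ∈ Subgroup.closure S1star, ∀ y ∈ Subgroup.closure S1star,
      ((x⁻¹ * y ∈ S1star ∨ (x⁻¹ * y)⁻¹ ∈ S1star) ↔
        ((φ2 x)⁻¹ * φ2 y ∈ S2star ∨ ((φ2 x)⁻¹ * φ2 y)⁻¹ ∈ S2star)) := by
  have hφ1symm1 : φ1.symm 1 = 1 := by
    rw [← hφ1e, RelIso.symm_apply_apply]
  have hφ1symmg2 : φ1.symm g2 = g1 := by
    rw [← hg, RelIso.symm_apply_apply]
  -- Lemma A: any identity-fixing iso Cay1 → Cay2 maps S1star into S2star.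
  have lemA : ∀ (ψ : cayleyGraph S1 hsymm1 hid1 ≃g cayleyGraph S2 hsymm2 hid2),
      ψ 1 = 1 → ∀ s ∈ S1star, ψ s ∈ S2star := by
    intro ψ hψ s hs
    rw [hS1star] at hs
    obtain ⟨ρ1, hρ1e, hρ1g⟩ := hs
    rw [hS2star]
    refine ⟨(φ1.symm.trans ρ1).trans ψ, ?_, ?_⟩
    · simp [RelIso.trans_apply, hφ1symm1, hρ1e, hψ]
    · simp [RelIso.trans_apply, hφ1symmg2, hρ1g]
  -- Lemma B: any identity-fixing iso Cay2 → Cay1 maps S2star into S1star.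
  have lemB : ∀ (ψ : cayleyGraph S2 hsymm2 hid2 ≃g cayleyGraph S1 hsymm1 hid1),
      ψ 1 = 1 → ∀ t ∈ S2star, ψ t ∈ S1star := by
    intro ψ hψ t ht
    rw [hS2star] at ht
    obtain ⟨ρ2, hρ2e, hρ2g⟩ := ht
    rw [hS1star]
    refine ⟨(φ1.trans ρ2).trans ψ, ?_, ?_⟩
    · simp [RelIso.trans_apply, hφ1e, hρ2e, hψ]
    · simp [RelIso.trans_apply, hg, hρ2g]
  -- Lemma C: for any x and s ∈ S1star, (φ2 x)⁻¹ * φ2 (x * s) ∈ S2star.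
  have lemC : ∀ (x : G1), ∀ s ∈ S1star, (φ2 x)⁻¹ * φ2 (x * s) ∈ S2star := by
    intro x s hs
    have := lemA (((cayleyLeftMul S1 hsymm1 hid1 x).trans φ2).trans
        (cayleyLeftMul S2 hsymm2 hid2 (φ2 x)⁻¹)) (by
      simp [RelIso.trans_apply]) s hs
    simpa [RelIso.trans_apply] using this
  -- Lemma D: for any z and t ∈ S2star, (φ2.symm z)⁻¹ * φ2.symm (z * t) ∈ S1star.
  have lemD : ∀ (z : G2), ∀ t ∈ S2star, (φ2.symm z)⁻¹ * φ2.symm (z * t) ∈ S1star := by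
    intro z t ht
    have hφ2symm1 : φ2.symm 1 = 1 := by rw [← hφ2e, RelIso.symm_apply_apply]
    have := lemB (((cayleyLeftMul S2 hsymm2 hid2 z).trans φ2.symm).trans
        (cayleyLeftMul S1 hsymm1 hid1 (φ2.symm z)⁻¹)) (by
      simp [RelIso.trans_apply, hφ2symm1]) t ht
    simpa [RelIso.trans_apply] using this
  -- The adjacency equivalence, for ALL x y.
  have adj : ∀ (x y : G1),
      (x⁻¹ * y ∈ S1star ∨ (x⁻¹ * y)⁻¹ ∈ S1star) ↔
      ((φ2 x)⁻¹ * φ2 y ∈ S2star ∨ ((φ2 x)⁻¹ * φ2 y)⁻¹ ∈ S2star) := by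
    intro x y
    constructor
    · rintro (h | h)
      · left
        have := lemC x _ h
        rwa [mul_inv_cancel_left] at this
      · right
        have h2 := lemC y _ h
        have h3 : y * (x⁻¹ * y)⁻¹ = x := by group
        rw [h3] at h2
        rw [mul_inv_rev, inv_inv]
        exact h2
    · rintro (h | h)
      · left
        have h2 := lemD (φ2 x) _ h
        rwa [mul_inv_cancel_left, RelIso.symm_apply_apply, RelIso.symm_apply_apply] at h2
      · right
        rw [mul_inv_rev, inv_inv] at h
        have h2 := lemD (φ2 y) _ h
        rw [mul_inv_cancel_left, RelIso.symm_apply_apply, RelIso.symm_apply_apply] at h2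
        rwa [mul_inv_rev, inv_inv]
  -- MapsTo forward
  have mapsTo : ∀ x ∈ Subgroup.closure S1star, φ2 x ∈ Subgroup.closure S2star := by
    intro x hx
    induction hx using Subgroup.closure_induction_right with
    | one => rw [hφ2e]; exact one_mem _
    | mul_right x hx s hs ih =>
        have h2 := lemC x s hs
        have heq : φ2 (x * s) = φ2 x * ((φ2 x)⁻¹ * φ2 (x * s)) := by group
        rw [heq]
        exact mul_mem ih (Subgroup.subset_closure h2)
    | mul_inv_cancel x hx s hs ih =>
        have h2 := lemC (x * s⁻¹) s hs
        rw [inv_mul_cancel_right] at h2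
        have heq : φ2 (x * s⁻¹) = φ2 x * ((φ2 (x * s⁻¹))⁻¹ * φ2 x)⁻¹ := by group
        rw [heq]
        exact mul_mem ih (inv_mem (Subgroup.subset_closure h2))
  -- MapsTo backward
  have mapsTo' : ∀ z ∈ Subgroup.closure S2star, φ2.symm z ∈ Subgroup.closure S1star := by
    have hφ2symm1 : φ2.symm 1 = 1 := by rw [← hφ2e, RelIso.symm_apply_apply]
    intro z hz
    induction hz using Subgroup.closure_induction_right with
    | one => rw [hφ2symm1]; exact one_mem _
    | mul_right z hz t ht ih =>
        have h2 := lemD z t ht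
        have heq : φ2.symm (z * t) = φ2.symm z * ((φ2.symm z)⁻¹ * φ2.symm (z * t)) := by group
        rw [heq]
        exact mul_mem ih (Subgroup.subset_closure h2)
    | mul_inv_cancel z hz t ht ih =>
        have h2 := lemD (z * t⁻¹) t ht
        rw [inv_mul_cancel_right] at h2
        have heq : φ2.symm (z * t⁻¹) =
            φ2.symm z * ((φ2.symm (z * t⁻¹))⁻¹ * φ2.symm z)⁻¹ := by group
        rw [heq]
        exact mul_mem ih (inv_mem (Subgroup.subset_closure h2))
  refine ⟨⟨mapsTo, φ2.injective.injOn, ?_⟩, fun x _ y _ => adj x y⟩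
  intro z hz
  exact ⟨φ2.symm z, mapsTo' z hz, φ2.apply_symm_apply z⟩
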